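/- Conservativity over FO(Q): for every untangled formula φ of first-order logic extended with a generalized quantifier Q, and every team X such that dom(X) ∩ BV(φ) = ∅ and FV(φ) ⊆ dom(X): M,X ⊨_mt φ if and only if X = ⟦φ⟧^M_{dom(X)}, where ⟦φ⟧^M_{x̄} = {s : {x̄} → M | M,s ⊨ φ} with ⊨ the standard Tarskian/Lindström satisfaction for FO(Q). -/

import Mathlib

set_option linter.unusedSectionVars false

namespace Paper

/-- A first-order vocabulary (signature): function and relation symbols with arities. -/
structure Sig where
  Func : Type
  arF : Func → ℕ
  Rel : Type
  arR : Rel → ℕ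

/-- A τ-structure with universe `α`. -/
structure Struc (σ : Sig) (α : Type) where
  interpF : (f : σ.Func) → (Fin (σ.arF f) → α) → α
  interpR : (r : σ.Rel) → (Fin (σ.arR r) → α) → Prop

/-- First-order terms; variables are natural numbers. -/
inductive Term (σ : Sig) where
  | var : ℕ → Term σ
  | func : (f : σ.Func) → (Fin (σ.arF f) → Term σ) → Term σ

/-- Interpretation of a term under an assignment. -/
def Term.eval {σ : Sig} {α : Type} (𝕄 : Struc σ α) (s : ℕ → α) : Term σ → α
  | .var x => s x
  | .func f ts => 𝕄.interpF f (fun i => (ts i).eval 𝕄 s)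

/-- Variables occurring in a term. -/
def Term.fv {σ : Sig} : Term σ → Finset ℕ
  | .var x => {x}
  | .func _ ts => Finset.univ.biUnion fun i => (ts i).fv

/-- A team: a finite set of variables (the domain) together with a set of assignments.
Assignments are encoded as total functions `ℕ → α` that take the value `default`
outside the domain of the team (so that an assignment `s : dom(X) → M` is identified
with its extension by `default`). -/
structure Team (α : Type) [Inhabited α] where
  dom : Finset ℕ
  assignments : Set (ℕ → α)
  supported : ∀ s ∈ assignments, ∀ y ∉ dom, s y = default

variable {σ : Sig} {α : Type} [Inhabited α]

/-- The team `∃x X`: domain `dom(X) \ {x}`, consisting of all (supported) `s` such that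
`s[a/x] ∈ X` for some `a` (which subsumes the clause "or `s ∈ X`" in the encoding). -/
def Team.eexists (x : ℕ) (X : Team α) : Team α where
  dom := X.dom.erase x
  assignments := {s | (∀ y ∉ X.dom.erase x, s y = default) ∧
    ∃ a : α, Function.update s x a ∈ X.assignments}
  supported := fun _ hs => hs.1

/-- The team `∀x X`: domain `dom(X) \ {x}`, consisting of all (supported) `s` such that
`s[a/x] ∈ X` for all `a ∈ M` (when `x ∈ dom(X)`), or `s ∈ X` (when `x ∉ dom(X)`). -/
def Team.eforall (x : ℕ) (X : Team α) : Team α where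
  dom := X.dom.erase x
  assignments := {s | (∀ y ∉ X.dom.erase x, s y = default) ∧
    if x ∈ X.dom then ∀ a : α, Function.update s x a ∈ X.assignments
    else s ∈ X.assignments}
  supported := fun _ hs => hs.1

/-- Iterated application `∃x̄ X`. -/
def Team.eexistsN (l : List ℕ) (X : Team α) : Team α := l.foldr Team.eexists X

/-- Iterated application `∀x̄ X`. -/
def Team.eforallN (l : List ℕ) (X : Team α) : Team α := l.foldr Team.eforall X

/-- Restriction of an assignment to a finite set of variables (default outside). -/
def restrictFun (d : Finset ℕ) (s : ℕ → α) : ℕ → α := fun y => if y ∈ d then s y else default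

/-- The restriction `X ↾ V` of a team, with domain `dom(X) ∩ V`. -/
def Team.restrict (X : Team α) (V : Finset ℕ) : Team α where
  dom := X.dom ∩ V
  assignments := {t | ∃ s ∈ X.assignments, t = restrictFun (X.dom ∩ V) s}
  supported := by rintro t ⟨s, _, rfl⟩ y hy; simp only [restrictFun]; exact if_neg hy

/-- The full team on a domain `d`: all (supported) assignments. -/
def Team.full (α : Type) [Inhabited α] (d : Finset ℕ) : Team α where
  dom := d
  assignments := {s | ∀ y ∉ d, s y = default}
  supported := fun _ hs => hs

/-- The complement team `X^c`: all assignments with domain `dom(X)` not in `X`. -/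
def Team.compl (X : Team α) : Team α where
  dom := X.dom
  assignments := {s | (∀ y ∉ X.dom, s y = default) ∧ s ∉ X.assignments}
  supported := fun _ hs => hs.1

/-- Union of two teams. -/
def Team.unionT (X Y : Team α) : Team α where
  dom := X.dom ∪ Y.dom
  assignments := X.assignments ∪ Y.assignments
  supported := by
    rintro s (hs | hs) y hy
    · exact X.supported s hs y (fun h => hy (Finset.mem_union_left _ h))
    · exact Y.supported s hs y (fun h => hy (Finset.mem_union_right _ h))

/-- The team `X[M/x] = {s[a/x] | s ∈ X, a ∈ M}`. -/
def Team.subM (X : Team α) (x : ℕ) : Team α where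
  dom := insert x X.dom
  assignments := {t | ∃ s ∈ X.assignments, ∃ a : α, t = Function.update s x a}
  supported := by
    rintro t ⟨s, hs, a, rfl⟩ y hy
    have hyx : y ≠ x := fun h => hy (h ▸ Finset.mem_insert_self x X.dom)
    rw [Function.update_of_ne hyx]
    exact X.supported s hs y (fun h => hy (Finset.mem_insert_of_mem h))

/-- The team `X[f/x] = {s[f(s)/x] | s ∈ X}` for `f : X → M`. -/
def Team.subf (X : Team α) (x : ℕ) (f : (ℕ → α) → α) : Team α where
  dom := insert x X.dom
  assignments := {t | ∃ s ∈ X.assignments, t = Function.update s x (f s)}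
  supported := by
    rintro t ⟨s, hs, rfl⟩ y hy
    have hyx : y ≠ x := fun h => hy (h ▸ Finset.mem_insert_self x X.dom)
    rw [Function.update_of_ne hyx]
    exact X.supported s hs y (fun h => hy (Finset.mem_insert_of_mem h))

/-- The team `X[F/x] = {s[a/x] | s ∈ X, a ∈ F(s)}` for `F : X → P(M)`. -/
def Team.subF (X : Team α) (x : ℕ) (F : (ℕ → α) → Set α) : Team α where
  dom := insert x X.dom
  assignments := {t | ∃ s ∈ X.assignments, ∃ a ∈ F s, t = Function.update s x a}
  supported := by
    rintro t ⟨s, hs, a, _, rfl⟩ y hy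
    have hyx : y ≠ x := fun h => hy (h ▸ Finset.mem_insert_self x X.dom)
    rw [Function.update_of_ne hyx]
    exact X.supported s hs y (fun h => hy (Finset.mem_insert_of_mem h))

/-- Simultaneous update `s[v̄/x̄]` of an assignment along a list of variables. -/
def updVec (s : ℕ → α) (l : List ℕ) (v : Fin l.length → α) : ℕ → α :=
  fun y => if h : y ∈ l then v ⟨l.idxOf y, List.idxOf_lt_length_iff.mpr h⟩ else s y

theorem updVec_not_mem (s : ℕ → α) (l : List ℕ) (v : Fin l.length → α) {y : ℕ} (h : y ∉ l) :
    updVec s l v y = s y := dif_neg h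

/-- The team `X[M/x̄]`. -/
def Team.subMVec (X : Team α) (l : List ℕ) : Team α where
  dom := X.dom ∪ l.toFinset
  assignments := {t | ∃ s ∈ X.assignments, ∃ v : Fin l.length → α, t = updVec s l v}
  supported := by
    rintro t ⟨s, hs, v, rfl⟩ y hy
    rw [updVec_not_mem s l v (fun h => hy (Finset.mem_union_right _ (List.mem_toFinset.mpr h)))]
    exact X.supported s hs y (fun h => hy (Finset.mem_union_left _ h))

/-- The team `X[F/x̄] = {s[ā/x̄] | s ∈ X, ā ∈ F(s)}` for a set-valued `F`. -/
def Team.subFVec (X : Team α) (l : List ℕ) (F : (ℕ → α) → Set (Fin l.length → α)) :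
    Team α where
  dom := X.dom ∪ l.toFinset
  assignments := {t | ∃ s ∈ X.assignments, ∃ v ∈ F s, t = updVec s l v}
  supported := by
    rintro t ⟨s, hs, v, _, rfl⟩ y hy
    rw [updVec_not_mem s l v (fun h => hy (Finset.mem_union_right _ (List.mem_toFinset.mpr h)))]
    exact X.supported s hs y (fun h => hy (Finset.mem_union_left _ h))

/-- The team `Qx̄ Y = {s : dom(Y)∖{x̄} → M | Y_s(x̄) ∈ Q_M}` for a (local) generalized
quantifier `Q_M` of type `⟨k⟩` where `k` is the length of `x̄`. -/
def Team.qapp (l : List ℕ) (QM : Set (Set (Fin l.length → α))) (Y : Team α) : Team α where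
  dom := Y.dom \ l.toFinset
  assignments := {s | (∀ y ∉ Y.dom \ l.toFinset, s y = default) ∧
    {v : Fin l.length → α | updVec s l v ∈ Y.assignments} ∈ QM}
  supported := fun _ hs => hs.1

/-- `Qx Y` for a (local) generalized quantifier of type `⟨1⟩`. -/
def Team.q1app (x : ℕ) (QM : Set (Set α)) (Y : Team α) : Team α where
  dom := Y.dom.erase x
  assignments := {s | (∀ y ∉ Y.dom.erase x, s y = default) ∧
    {a : α | Function.update s x a ∈ Y.assignments} ∈ QM}
  supported := fun _ hs => hs.1

/-- The team `{ε}` consisting of just the empty assignment. -/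
def epsTeam (α : Type) [Inhabited α] : Team α where
  dom := ∅
  assignments := {fun _ => default}
  supported := by rintro s rfl y _; rfl

/-- `rel(X) ⊆ M^n`: the relation corresponding to a team, with `dom(X)` enumerated in
increasing order. -/
def Team.relSetN (X : Team α) (n : ℕ) (h : X.dom.card = n) : Set (Fin n → α) :=
  {v | ∃ s ∈ X.assignments, ∀ i, v i = s (X.dom.orderEmbOfFin h i)}

end Paper

namespace Paper

/-- Formulas of first-order logic extended with a generalized quantifier `Q` of type
`⟨1⟩` (in negation normal form, viewed inside mt-logic, so with the internal
connectives `⩓`/`⩔`). -/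
inductive QForm (σ : Sig) where
  | rel : (r : σ.Rel) → (Fin (σ.arR r) → Term σ) → QForm σ
  | nrel : (r : σ.Rel) → (Fin (σ.arR r) → Term σ) → QForm σ
  | eq : Term σ → Term σ → QForm σ
  | neq : Term σ → Term σ → QForm σ
  | iand : QForm σ → QForm σ → QForm σ
  | ior : QForm σ → QForm σ → QForm σ
  | ex : ℕ → QForm σ → QForm σ
  | all : ℕ → QForm σ → QForm σ
  | qu : ℕ → QForm σ → QForm σ

variable {σ : Sig} {α : Type} [Inhabited α]

/-- Free variables. -/
def QForm.fv : QForm σ → Finset ℕ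
  | .rel _ ts | .nrel _ ts => Finset.univ.biUnion fun i => (ts i).fv
  | .eq t u | .neq t u => t.fv ∪ u.fv
  | .iand φ ψ | .ior φ ψ => φ.fv ∪ ψ.fv
  | .ex x φ | .all x φ | .qu x φ => φ.fv.erase x

/-- Bound variables. -/
def QForm.bv : QForm σ → Finset ℕ
  | .rel _ _ | .nrel _ _ | .eq _ _ | .neq _ _ => ∅
  | .iand φ ψ | .ior φ ψ => φ.bv ∪ ψ.bv
  | .ex x φ | .all x φ | .qu x φ => insert x φ.bv

/-- No quantifier (including `Q`) binding `x` occurs in the scope of another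
quantifier binding `x`. -/
def QForm.noRebind : QForm σ → Prop
  | .rel _ _ | .nrel _ _ | .eq _ _ | .neq _ _ => True
  | .iand φ ψ | .ior φ ψ => φ.noRebind ∧ ψ.noRebind
  | .ex x φ | .all x φ | .qu x φ => x ∉ φ.bv ∧ φ.noRebind

/-- A formula is untangled if no quantifier `Qx` appears in the scope of another
quantifier `Q'x` and no variable is both free and bound. -/
def QForm.untangled (φ : QForm σ) : Prop := φ.noRebind ∧ Disjoint φ.fv φ.bv

/-- Standard Tarskian/Lindström satisfaction for `FO(Q)`, where the local quantifier
`Q_M` is given by `QM`. -/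
def QForm.tsat (𝕄 : Struc σ α) (QM : Set (Set α)) : (ℕ → α) → QForm σ → Prop
  | s, .rel r ts => 𝕄.interpR r fun i => (ts i).eval 𝕄 s
  | s, .nrel r ts => ¬ 𝕄.interpR r fun i => (ts i).eval 𝕄 s
  | s, .eq t u => t.eval 𝕄 s = u.eval 𝕄 s
  | s, .neq t u => t.eval 𝕄 s ≠ u.eval 𝕄 s
  | s, .iand φ ψ => φ.tsat 𝕄 QM s ∧ ψ.tsat 𝕄 QM s
  | s, .ior φ ψ => φ.tsat 𝕄 QM s ∨ ψ.tsat 𝕄 QM s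
  | s, .ex x φ => ∃ a : α, φ.tsat 𝕄 QM (Function.update s x a)
  | s, .all x φ => ∀ a : α, φ.tsat 𝕄 QM (Function.update s x a)
  | s, .qu x φ => {a : α | φ.tsat 𝕄 QM (Function.update s x a)} ∈ QM

/-- The semantic value `⟦φ⟧^𝕄_{d}` of an `FO(Q)` formula. -/
def SemValQ (𝕄 : Struc σ α) (QM : Set (Set α)) (d : Finset ℕ) (φ : QForm σ) : Team α where
  dom := d
  assignments := {s | (∀ y ∉ d, s y = default) ∧ φ.tsat 𝕄 QM s}
  supported := fun _ hs => hs.1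

/-- Team satisfaction for mt-logic extended with the generalized quantifier `Q`. -/
def QSat (𝕄 : Struc σ α) (QM : Set (Set α)) : QForm σ → Team α → Prop
  | .rel r ts, X => ∀ s : ℕ → α, (∀ y ∉ X.dom, s y = default) →
      (s ∈ X.assignments ↔ 𝕄.interpR r fun i => (ts i).eval 𝕄 s)
  | .nrel r ts, X => ∀ s : ℕ → α, (∀ y ∉ X.dom, s y = default) →
      (s ∈ X.assignments ↔ ¬ 𝕄.interpR r fun i => (ts i).eval 𝕄 s)
  | .eq t u, X => ∀ s : ℕ → α, (∀ y ∉ X.dom, s y = default) →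
      (s ∈ X.assignments ↔ t.eval 𝕄 s = u.eval 𝕄 s)
  | .neq t u, X => ∀ s : ℕ → α, (∀ y ∉ X.dom, s y = default) →
      (s ∈ X.assignments ↔ t.eval 𝕄 s ≠ u.eval 𝕄 s)
  | .iand φ ψ, X => ∃ Y Z : Team α, Y.dom = X.dom ∧ Z.dom = X.dom ∧
      X.assignments = Y.assignments ∩ Z.assignments ∧ QSat 𝕄 QM φ Y ∧ QSat 𝕄 QM ψ Z
  | .ior φ ψ, X => ∃ Y Z : Team α, Y.dom = X.dom ∧ Z.dom = X.dom ∧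
      X.assignments = Y.assignments ∪ Z.assignments ∧ QSat 𝕄 QM φ Y ∧ QSat 𝕄 QM ψ Z
  | .ex x φ, X => ∃ Y : Team α, x ∈ Y.dom ∧ Team.eexists x Y = Team.eexists x X ∧
      QSat 𝕄 QM φ Y
  | .all x φ, X => ∃ Y : Team α, x ∈ Y.dom ∧ Team.eforall x Y = Team.eexists x X ∧
      QSat 𝕄 QM φ Y
  | .qu x φ, X => ∃ Y : Team α, x ∈ Y.dom ∧ QSat 𝕄 QM φ Y ∧
      Team.eexists x X = Team.q1app x QM Y


/-- Extensionality for teams. -/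
theorem Team.ext' {X Y : Team α} (hd : X.dom = Y.dom)
    (ha : X.assignments = Y.assignments) : X = Y := by
  cases X; cases Y; simp_all

theorem eexists_self {X : Team α} {x : ℕ} (hx : x ∉ X.dom) :
    Team.eexists x X = X := by
  have hde : X.dom.erase x = X.dom := Finset.erase_eq_of_notMem hx
  apply Team.ext'
  · simp [Team.eexists, hde]
  · ext s
    simp only [Team.eexists, Set.mem_setOf_eq, hde]
    constructor
    · rintro ⟨hsup, a, ha⟩
      have hax : a = default := by
        have := X.supported _ ha x hx
        simpa using this
      have hsx : s x = default := hsup x hx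
      have hupd : Function.update s x a = s := by
        funext y
        rcases eq_or_ne y x with rfl | h
        · simp [hax, hsx]
        · simp [Function.update_of_ne h]
      rwa [hupd] at ha
    · intro hs
      exact ⟨X.supported s hs, s x, by rwa [Function.update_eq_self]⟩

theorem update_mem_semval {𝕄 : Struc σ α} {QM : Set (Set α)} {φ : QForm σ}
    {d : Finset ℕ} {x : ℕ} {s : ℕ → α} (hs : ∀ y ∉ d, s y = default) (a : α) :
    Function.update s x a ∈ (SemValQ 𝕄 QM (insert x d) φ).assignments ↔
      φ.tsat 𝕄 QM (Function.update s x a) := by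
  have hsup : ∀ y ∉ insert x d, Function.update s x a y = default := by
    intro y hy
    have hyx : y ≠ x := fun h => hy (h ▸ Finset.mem_insert_self x d)
    rw [Function.update_of_ne hyx]
    exact hs y (fun h => hy (Finset.mem_insert_of_mem h))
  exact and_iff_right hsup

theorem eexists_semval (𝕄 : Struc σ α) (QM : Set (Set α)) (φ : QForm σ)
    (x : ℕ) (d : Finset ℕ) (hx : x ∉ d) :
    Team.eexists x (SemValQ 𝕄 QM (insert x d) φ) = SemValQ 𝕄 QM d (.ex x φ) := by
  have hde : (insert x d).erase x = d := Finset.erase_insert hx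
  apply Team.ext'
  · simp [Team.eexists, SemValQ, hde]
  · ext s
    simp only [Team.eexists, SemValQ, Set.mem_setOf_eq, hde]
    refine and_congr_right fun h1 => ?_
    simp only [QForm.tsat]
    exact exists_congr fun a => update_mem_semval h1 a

theorem eforall_semval (𝕄 : Struc σ α) (QM : Set (Set α)) (φ : QForm σ)
    (x : ℕ) (d : Finset ℕ) (hx : x ∉ d) :
    Team.eforall x (SemValQ 𝕄 QM (insert x d) φ) = SemValQ 𝕄 QM d (.all x φ) := by
  have hde : (insert x d).erase x = d := Finset.erase_insert hx
  apply Team.ext'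
  · simp [Team.eforall, SemValQ, hde]
  · ext s
    simp only [Team.eforall, SemValQ, Set.mem_setOf_eq, hde,
      if_pos (Finset.mem_insert_self x d)]
    refine and_congr_right fun h1 => ?_
    simp only [QForm.tsat]
    exact forall_congr' fun a => update_mem_semval h1 a

theorem q1app_semval (𝕄 : Struc σ α) (QM : Set (Set α)) (φ : QForm σ)
    (x : ℕ) (d : Finset ℕ) (hx : x ∉ d) :
    Team.q1app x QM (SemValQ 𝕄 QM (insert x d) φ) = SemValQ 𝕄 QM d (.qu x φ) := by
  have hde : (insert x d).erase x = d := Finset.erase_insert hx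
  apply Team.ext'
  · simp [Team.q1app, SemValQ, hde]
  · ext s
    simp only [Team.q1app, SemValQ, Set.mem_setOf_eq, hde]
    refine and_congr_right fun h1 => ?_
    simp only [QForm.tsat]
    have hset : {a : α | (∀ y ∉ insert x d, Function.update s x a y = default) ∧
        φ.tsat 𝕄 QM (Function.update s x a)}
        = {a : α | φ.tsat 𝕄 QM (Function.update s x a)} := by
      ext a; exact update_mem_semval h1 a
    rw [hset]

theorem untangled_q {φ : QForm σ} {x : ℕ} (hxbv : x ∉ φ.bv)
    (hdisj : Disjoint (φ.fv.erase x) (insert x φ.bv)) : Disjoint φ.fv φ.bv := by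
  rw [Finset.disjoint_left]
  intro y hy hyb
  rcases eq_or_ne y x with rfl | h
  · exact hxbv hyb
  · exact Finset.disjoint_left.mp hdisj (Finset.mem_erase.mpr ⟨h, hy⟩)
      (Finset.mem_insert_of_mem hyb)

/-- STATEMENT 16 (Conservativity over `FO(Q)`): for every untangled formula `φ` of
first-order logic extended with a generalized quantifier `Q` and every team `X` such
that `dom(X) ∩ BV(φ) = ∅` and `FV(φ) ⊆ dom(X)`: `M,X ⊨_mt φ` iff
`X = ⟦φ⟧^M_{dom(X)}`. -/
theorem qsat_untangled (𝕄 : Struc σ α) (QM : Set (Set α)) (φ : QForm σ) (X : Team α)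
    (hUnt : φ.untangled) (hBV : Disjoint X.dom φ.bv) (hfv : φ.fv ⊆ X.dom) :
    QSat 𝕄 QM φ X ↔ X = SemValQ 𝕄 QM X.dom φ := by
  induction φ generalizing X with
  | rel r ts =>
    constructor
    · intro h
      refine Team.ext' rfl ?_
      ext s
      constructor
      · intro hs
        exact ⟨X.supported s hs, (h s (X.supported s hs)).mp hs⟩
      · rintro ⟨hsup, ht⟩
        exact (h s hsup).mpr ht
    · intro h s hsup
      rw [show X.assignments = _ from congrArg Team.assignments h]
      exact and_iff_right hsup
  | nrel r ts =>
    constructor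
    · intro h
      refine Team.ext' rfl ?_
      ext s
      constructor
      · intro hs
        exact ⟨X.supported s hs, (h s (X.supported s hs)).mp hs⟩
      · rintro ⟨hsup, ht⟩
        exact (h s hsup).mpr ht
    · intro h s hsup
      rw [show X.assignments = _ from congrArg Team.assignments h]
      exact and_iff_right hsup
  | eq t u =>
    constructor
    · intro h
      refine Team.ext' rfl ?_
      ext s
      constructor
      · intro hs
        exact ⟨X.supported s hs, (h s (X.supported s hs)).mp hs⟩
      · rintro ⟨hsup, ht⟩
        exact (h s hsup).mpr ht
    · intro h s hsup
      rw [show X.assignments = _ from congrArg Team.assignments h]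
      exact and_iff_right hsup
  | neq t u =>
    constructor
    · intro h
      refine Team.ext' rfl ?_
      ext s
      constructor
      · intro hs
        exact ⟨X.supported s hs, (h s (X.supported s hs)).mp hs⟩
      · rintro ⟨hsup, ht⟩
        exact (h s hsup).mpr ht
    · intro h s hsup
      rw [show X.assignments = _ from congrArg Team.assignments h]
      exact and_iff_right hsup
  | iand φ ψ ihφ ihψ =>
    obtain ⟨⟨hnrφ, hnrψ⟩, hdisj⟩ := hUnt
    have huφ : φ.untangled := ⟨hnrφ, (hdisj.mono_left Finset.subset_union_left).mono_right
      Finset.subset_union_left⟩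
    have huψ : ψ.untangled := ⟨hnrψ, (hdisj.mono_left Finset.subset_union_right).mono_right
      Finset.subset_union_right⟩
    have hBVφ : Disjoint X.dom φ.bv := hBV.mono_right Finset.subset_union_left
    have hBVψ : Disjoint X.dom ψ.bv := hBV.mono_right Finset.subset_union_right
    have hfvφ : φ.fv ⊆ X.dom := fun y hy => hfv (Finset.mem_union_left _ hy)
    have hfvψ : ψ.fv ⊆ X.dom := fun y hy => hfv (Finset.mem_union_right _ hy)
    constructor
    · rintro ⟨Y, Z, hYd, hZd, hXa, hYs, hZs⟩
      have hY := (ihφ Y huφ (hYd ▸ hBVφ) (hYd ▸ hfvφ)).mp hYs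
      have hZ := (ihψ Z huψ (hZd ▸ hBVψ) (hZd ▸ hfvψ)).mp hZs
      refine Team.ext' rfl ?_
      rw [hXa, show Y.assignments = _ from congrArg Team.assignments hY,
        show Z.assignments = _ from congrArg Team.assignments hZ, hYd, hZd]
      ext s
      simp only [SemValQ, Set.mem_inter_iff, Set.mem_setOf_eq, QForm.tsat]
      tauto
    · intro hX
      refine ⟨SemValQ 𝕄 QM X.dom φ, SemValQ 𝕄 QM X.dom ψ, rfl, rfl, ?_, ?_, ?_⟩
      · rw [show X.assignments = _ from congrArg Team.assignments hX]
        ext s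
        simp only [SemValQ, Set.mem_inter_iff, Set.mem_setOf_eq, QForm.tsat]
        tauto
      · exact (ihφ (SemValQ 𝕄 QM X.dom φ) huφ hBVφ hfvφ).mpr rfl
      · exact (ihψ (SemValQ 𝕄 QM X.dom ψ) huψ hBVψ hfvψ).mpr rfl
  | ior φ ψ ihφ ihψ =>
    obtain ⟨⟨hnrφ, hnrψ⟩, hdisj⟩ := hUnt
    have huφ : φ.untangled := ⟨hnrφ, (hdisj.mono_left Finset.subset_union_left).mono_right
      Finset.subset_union_left⟩
    have huψ : ψ.untangled := ⟨hnrψ, (hdisj.mono_left Finset.subset_union_right).mono_right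
      Finset.subset_union_right⟩
    have hBVφ : Disjoint X.dom φ.bv := hBV.mono_right Finset.subset_union_left
    have hBVψ : Disjoint X.dom ψ.bv := hBV.mono_right Finset.subset_union_right
    have hfvφ : φ.fv ⊆ X.dom := fun y hy => hfv (Finset.mem_union_left _ hy)
    have hfvψ : ψ.fv ⊆ X.dom := fun y hy => hfv (Finset.mem_union_right _ hy)
    constructor
    · rintro ⟨Y, Z, hYd, hZd, hXa, hYs, hZs⟩
      have hY := (ihφ Y huφ (hYd ▸ hBVφ) (hYd ▸ hfvφ)).mp hYs
      have hZ := (ihψ Z huψ (hZd ▸ hBVψ) (hZd ▸ hfvψ)).mp hZs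
      refine Team.ext' rfl ?_
      rw [hXa, show Y.assignments = _ from congrArg Team.assignments hY,
        show Z.assignments = _ from congrArg Team.assignments hZ, hYd, hZd]
      ext s
      simp only [SemValQ, Set.mem_union, Set.mem_setOf_eq, QForm.tsat]
      tauto
    · intro hX
      refine ⟨SemValQ 𝕄 QM X.dom φ, SemValQ 𝕄 QM X.dom ψ, rfl, rfl, ?_, ?_, ?_⟩
      · rw [show X.assignments = _ from congrArg Team.assignments hX]
        ext s
        simp only [SemValQ, Set.mem_union, Set.mem_setOf_eq, QForm.tsat]
        tauto
      · exact (ihφ (SemValQ 𝕄 QM X.dom φ) huφ hBVφ hfvφ).mpr rfl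
      · exact (ihψ (SemValQ 𝕄 QM X.dom ψ) huψ hBVψ hfvψ).mpr rfl
  | ex x φ ih =>
    obtain ⟨⟨hxbv, hnr⟩, hdisj⟩ := hUnt
    have hx : x ∉ X.dom := Finset.disjoint_right.mp hBV (Finset.mem_insert_self x _)
    have huφ : φ.untangled := ⟨hnr, untangled_q hxbv hdisj⟩
    have hd' : Disjoint (insert x X.dom) φ.bv := by
      rw [Finset.disjoint_left]
      intro y hy hyb
      rcases Finset.mem_insert.mp hy with rfl | h
      · exact hxbv hyb
      · exact Finset.disjoint_left.mp hBV h (Finset.mem_insert_of_mem hyb)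
    have hf' : φ.fv ⊆ insert x X.dom := by
      intro y hy
      rcases eq_or_ne y x with rfl | h
      · exact Finset.mem_insert_self _ _
      · exact Finset.mem_insert_of_mem (hfv (Finset.mem_erase.mpr ⟨h, hy⟩))
    constructor
    · rintro ⟨Y, hxY, hEq, hYs⟩
      have hYdom : Y.dom = insert x X.dom := by
        have h1 : Y.dom.erase x = X.dom := by
          have := congrArg Team.dom hEq
          simpa [Team.eexists, Finset.erase_eq_of_notMem hx] using this
        rw [← h1, Finset.insert_erase hxY]
      have hY := (ih Y huφ (hYdom ▸ hd') (hYdom ▸ hf')).mp hYs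
      calc X = Team.eexists x X := (eexists_self hx).symm
        _ = Team.eexists x Y := hEq.symm
        _ = SemValQ 𝕄 QM X.dom (.ex x φ) := by
            rw [hY, hYdom, eexists_semval 𝕄 QM φ x X.dom hx]
    · intro hX
      refine ⟨SemValQ 𝕄 QM (insert x X.dom) φ, Finset.mem_insert_self _ _, ?_, ?_⟩
      · rw [eexists_semval 𝕄 QM φ x X.dom hx, eexists_self hx]
        exact hX.symm
      · exact (ih (SemValQ 𝕄 QM (insert x X.dom) φ) huφ hd' hf').mpr rfl
  | all x φ ih =>
    obtain ⟨⟨hxbv, hnr⟩, hdisj⟩ := hUnt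
    have hx : x ∉ X.dom := Finset.disjoint_right.mp hBV (Finset.mem_insert_self x _)
    have huφ : φ.untangled := ⟨hnr, untangled_q hxbv hdisj⟩
    have hd' : Disjoint (insert x X.dom) φ.bv := by
      rw [Finset.disjoint_left]
      intro y hy hyb
      rcases Finset.mem_insert.mp hy with rfl | h
      · exact hxbv hyb
      · exact Finset.disjoint_left.mp hBV h (Finset.mem_insert_of_mem hyb)
    have hf' : φ.fv ⊆ insert x X.dom := by
      intro y hy
      rcases eq_or_ne y x with rfl | h
      · exact Finset.mem_insert_self _ _
      · exact Finset.mem_insert_of_mem (hfv (Finset.mem_erase.mpr ⟨h, hy⟩))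
    constructor
    · rintro ⟨Y, hxY, hEq, hYs⟩
      rw [eexists_self hx] at hEq
      have hYdom : Y.dom = insert x X.dom := by
        have h1 : Y.dom.erase x = X.dom := by
          have := congrArg Team.dom hEq
          simpa [Team.eforall] using this
        rw [← h1, Finset.insert_erase hxY]
      have hY := (ih Y huφ (hYdom ▸ hd') (hYdom ▸ hf')).mp hYs
      calc X = Team.eforall x Y := hEq.symm
        _ = SemValQ 𝕄 QM X.dom (.all x φ) := by
            rw [hY, hYdom, eforall_semval 𝕄 QM φ x X.dom hx]
    · intro hX
      refine ⟨SemValQ 𝕄 QM (insert x X.dom) φ, Finset.mem_insert_self _ _, ?_, ?_⟩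
      · rw [eforall_semval 𝕄 QM φ x X.dom hx, eexists_self hx]
        exact hX.symm
      · exact (ih (SemValQ 𝕄 QM (insert x X.dom) φ) huφ hd' hf').mpr rfl
  | qu x φ ih =>
    obtain ⟨⟨hxbv, hnr⟩, hdisj⟩ := hUnt
    have hx : x ∉ X.dom := Finset.disjoint_right.mp hBV (Finset.mem_insert_self x _)
    have huφ : φ.untangled := ⟨hnr, untangled_q hxbv hdisj⟩
    have hd' : Disjoint (insert x X.dom) φ.bv := by
      rw [Finset.disjoint_left]
      intro y hy hyb
      rcases Finset.mem_insert.mp hy with rfl | h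
      · exact hxbv hyb
      · exact Finset.disjoint_left.mp hBV h (Finset.mem_insert_of_mem hyb)
    have hf' : φ.fv ⊆ insert x X.dom := by
      intro y hy
      rcases eq_or_ne y x with rfl | h
      · exact Finset.mem_insert_self _ _
      · exact Finset.mem_insert_of_mem (hfv (Finset.mem_erase.mpr ⟨h, hy⟩))
    constructor
    · rintro ⟨Y, hxY, hYs, hEq⟩
      rw [eexists_self hx] at hEq
      have hYdom : Y.dom = insert x X.dom := by
        have h1 : Y.dom.erase x = X.dom := by
          have := congrArg Team.dom hEq
          simpa [Team.q1app] using this.symm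
        rw [← h1, Finset.insert_erase hxY]
      have hY := (ih Y huφ (hYdom ▸ hd') (hYdom ▸ hf')).mp hYs
      calc X = Team.q1app x QM Y := hEq
        _ = SemValQ 𝕄 QM X.dom (.qu x φ) := by
            rw [hY, hYdom, q1app_semval 𝕄 QM φ x X.dom hx]
    · intro hX
      refine ⟨SemValQ 𝕄 QM (insert x X.dom) φ, Finset.mem_insert_self _ _, ?_, ?_⟩
      · exact (ih (SemValQ 𝕄 QM (insert x X.dom) φ) huφ hd' hf').mpr rfl
      · rw [eexists_self hx, q1app_semval 𝕄 QM φ x X.dom hx]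
        exact hX


end Paper
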